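/- Let Φ : ℝ^{N₁} × ℝ^{N₂} → ℂ satisfy the rapid decay bound |Φ(x,y)| ≤ C_M (1 + |x| + |y|)^{−M} for some M > N₁ + N₂/ρ + 1, with 0 < ρ < 1, and define Φ_δ(x,y) = δ^{−N₁} δ^{−N₂/ρ} Φ(x/δ, y/δ^{1/ρ}). Then for (x,y) with 0 < δ ≤ |x|, one has ∫₀^{|x|} |Φ_δ(x,y)|² dδ/δ ≤ A·|x|^{−2N₁ − 2N₂/ρ} with A depending only on C_M, M, N₁, N₂, ρ. -/

import Mathlib

open MeasureTheory

theorem stmt_9 (N₁ N₂ : ℕ) (ρ : ℝ) (hρ₀ : 0 < ρ) (hρ₁ : ρ < 1)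
    (Φ : EuclideanSpace ℝ (Fin N₁) × EuclideanSpace ℝ (Fin N₂) → ℂ)
    (M CM : ℝ) (hM : (N₁ : ℝ) + (N₂ : ℝ) / ρ + 1 < M)
    (hΦ : ∀ p, ‖Φ p‖ ≤ CM * (1 + ‖p.1‖ + ‖p.2‖) ^ (-M)) :
    ∃ A : ℝ, ∀ (x : EuclideanSpace ℝ (Fin N₁)) (y : EuclideanSpace ℝ (Fin N₂)),
      x ≠ 0 →
        (∫ δ in Set.Ioc (0 : ℝ) ‖x‖,
          ‖(δ ^ (-(N₁ : ℝ)) * δ ^ (-(N₂ : ℝ) / ρ)) •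
            Φ (δ⁻¹ • x, (δ ^ (-(1 / ρ)) : ℝ) • y)‖ ^ 2 / δ)
          ≤ A * ‖x‖ ^ (-2 * (N₁ : ℝ) - 2 * (N₂ : ℝ) / ρ) := by
  have hN2 : (0:ℝ) ≤ (N₂:ℝ)/ρ := by positivity
  have hN1 : (0:ℝ) ≤ (N₁:ℝ) := Nat.cast_nonneg _
  have hM0 : 0 < M := by linarith
  have hCM : 0 ≤ CM := by
    have h := hΦ (0, 0)
    simp at h
    exact le_trans (norm_nonneg _) h
  set α : ℝ := 2*M - 2*(N₁:ℝ) - 2*((N₂:ℝ)/ρ) with hαdef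
  have hα2 : 2 < α := by simp only [hαdef]; linarith
  have hα0 : 0 < α := by linarith
  refine ⟨CM^2/α, ?_⟩
  intro x y hx
  have hx' : 0 < ‖x‖ := norm_pos_iff.mpr hx
  set b := ‖x‖ with hb
  have sq_rpow : ∀ (t p : ℝ), 0 ≤ t → (t^p)^2 = t^(2*p) := by
    intro t p ht
    rw [← Real.rpow_natCast (t^p) 2, ← Real.rpow_mul ht]
    norm_num; ring_nf
  have hbound : ∀ δ ∈ Set.Ioc (0:ℝ) b,
      ‖(δ ^ (-(N₁ : ℝ)) * δ ^ (-(N₂ : ℝ) / ρ)) •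
          Φ (δ⁻¹ • x, (δ ^ (-(1 / ρ)) : ℝ) • y)‖ ^ 2 / δ
        ≤ CM^2 * b^(-(2*M)) * δ^(α-1) := by
    rintro δ ⟨hδ0, hδb⟩
    have hΦb : ‖Φ (δ⁻¹ • x, (δ ^ (-(1 / ρ)) : ℝ) • y)‖ ≤ CM * (δ⁻¹ * b)^(-M) := by
      refine (hΦ _).trans ?_
      have hxn : ‖δ⁻¹ • x‖ = δ⁻¹ * b := by
        rw [norm_smul, Real.norm_eq_abs, abs_of_pos (inv_pos.mpr hδ0)]
      have h1 : (δ⁻¹ * b) ≤ 1 + ‖(δ⁻¹ • x, (δ ^ (-(1 / ρ)) : ℝ) • y).1‖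
          + ‖(δ⁻¹ • x, (δ ^ (-(1 / ρ)) : ℝ) • y).2‖ := by
        simp only
        rw [hxn]
        nlinarith [norm_nonneg ((δ ^ (-(1 / ρ)) : ℝ) • y)]
      exact mul_le_mul_of_nonneg_left
        (Real.rpow_le_rpow_of_nonpos (by positivity) h1 (by linarith)) hCM
    have hc : (0:ℝ) < δ ^ (-(N₁ : ℝ)) * δ ^ (-(N₂ : ℝ) / ρ) := by positivity
    have hnorm : ‖(δ ^ (-(N₁ : ℝ)) * δ ^ (-(N₂ : ℝ) / ρ)) •
          Φ (δ⁻¹ • x, (δ ^ (-(1 / ρ)) : ℝ) • y)‖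
        ≤ (δ ^ (-(N₁ : ℝ)) * δ ^ (-(N₂ : ℝ) / ρ)) * (CM * (δ⁻¹ * b)^(-M)) := by
      rw [norm_smul, Real.norm_eq_abs, abs_of_pos hc]
      exact mul_le_mul_of_nonneg_left hΦb hc.le
    calc ‖(δ ^ (-(N₁ : ℝ)) * δ ^ (-(N₂ : ℝ) / ρ)) •
          Φ (δ⁻¹ • x, (δ ^ (-(1 / ρ)) : ℝ) • y)‖ ^ 2 / δ
        ≤ ((δ ^ (-(N₁ : ℝ)) * δ ^ (-(N₂ : ℝ) / ρ)) * (CM * (δ⁻¹ * b)^(-M)))^2 / δ := by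
          gcongr
      _ = CM^2 * b^(-(2*M)) * δ^(α-1) := by
          rw [Real.mul_rpow (by positivity) hx'.le, Real.inv_rpow hδ0.le,
            ← Real.rpow_neg hδ0.le, neg_neg]
          rw [mul_pow, mul_pow, sq_rpow _ _ hδ0.le, sq_rpow _ _ hδ0.le, mul_pow, mul_pow,
            sq_rpow _ _ hδ0.le, sq_rpow _ _ hx'.le, show (2:ℝ)*(-M) = -(2*M) by ring,
            show δ ^ (2 * -(N₁:ℝ)) * δ ^ (2 * (-(N₂:ℝ) / ρ)) *
                (CM ^ 2 * (δ ^ (2*M) * b ^ (-(2 * M)))) / δ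
              = CM ^ 2 * b ^ (-(2*M)) *
                (δ ^ (2 * -(N₁:ℝ)) * δ ^ (2 * (-(N₂:ℝ) / ρ)) * δ ^ (2*M) / δ) by ring,
            ← Real.rpow_add hδ0, ← Real.rpow_add hδ0,
            ← Real.rpow_sub_one hδ0.ne']
          rw [show 2 * -(N₁:ℝ) + 2 * (-(N₂:ℝ) / ρ) + 2 * M = α by
            simp only [hαdef]; ring]
  have hg : IntegrableOn (fun δ => CM^2 * b^(-(2*M)) * δ^(α-1)) (Set.Ioc (0:ℝ) b) := by
    have := (intervalIntegral.intervalIntegrable_rpow' (a := 0) (b := b)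
      (show (-1:ℝ) < α - 1 by linarith))
    exact ((intervalIntegrable_iff_integrableOn_Ioc_of_le hx'.le).mp this).const_mul _
  have hmono : (∫ δ in Set.Ioc (0 : ℝ) b,
        ‖(δ ^ (-(N₁ : ℝ)) * δ ^ (-(N₂ : ℝ) / ρ)) •
          Φ (δ⁻¹ • x, (δ ^ (-(1 / ρ)) : ℝ) • y)‖ ^ 2 / δ)
      ≤ ∫ δ in Set.Ioc (0 : ℝ) b, CM^2 * b^(-(2*M)) * δ^(α-1) := by
    refine integral_mono_of_nonneg ?_ hg ?_
    · filter_upwards [ae_restrict_mem measurableSet_Ioc] with δ hδ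
      have := hδ.1
      positivity
    · filter_upwards [ae_restrict_mem measurableSet_Ioc] with δ hδ
      exact hbound δ hδ
  refine hmono.trans ?_
  rw [integral_const_mul, ← intervalIntegral.integral_of_le hx'.le,
    integral_rpow (Or.inl (by linarith : (-1:ℝ) < α - 1))]
  rw [Real.zero_rpow (by linarith : α - 1 + 1 ≠ 0), sub_add_cancel]
  have : CM ^ 2 * b ^ (-(2 * M)) * ((b ^ α - 0) / α)
      = CM^2/α * (b ^ (-(2*M)) * b ^ α) := by ring
  rw [this, ← Real.rpow_add hx']
  rw [show -(2*M) + α = -2 * (N₁:ℝ) - 2 * (N₂:ℝ) / ρ by simp only [hαdef]; ring]
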